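/- Let M be a reduced Krull monoid with torsion class group. For each strong atom a of M, define λ_a : M → ℚ_{≥0} by λ_a(x) = x(a)/m(x), where x^{m(x)} = ∏_{a} a^{x(a)} is a decay decomposition (and λ_a(u) = 0 for units u). Then λ_a is a monoid homomorphism: λ_a(xy) = λ_a(x) + λ_a(y) for all x, y ∈ M. -/

import Mathlib

/-- `a` is an atom of the (cancellative commutative) monoid `M`. -/
def IsAtomM {M : Type*} [CancelCommMonoid M] (a : M) : Prop :=
  ¬ IsUnit a ∧ ∀ b c : M, a = b * c → IsUnit b ∨ IsUnit c

/-- `a` is a strong atom of `M`: an atom all of whose powers `a ^ n` factor uniquely into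
atoms of `M` (namely as `n` copies of `a`). -/
def IsStrongAtomM {M : Type*} [CancelCommMonoid M] (a : M) : Prop :=
  IsAtomM a ∧ ∀ n : ℕ, 0 < n → ∀ s : Multiset M,
    (∀ b ∈ s, IsAtomM b) → s.prod = a ^ n → s = Multiset.replicate n a

/-- `p` is a prime element of `M`. -/
def IsPrimeM {M : Type*} [CancelCommMonoid M] (p : M) : Prop :=
  ¬ IsUnit p ∧ ∀ b c : M, p ∣ b * c → p ∣ b ∨ p ∣ c

/-- `M` is reduced: its only unit is the identity. -/
def IsReducedM (M : Type*) [Monoid M] : Prop := ∀ u : M, IsUnit u → u = 1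

/-- `τ : M → F`, with `F` the free commutative monoid on `ι` (written multiplicatively as
`Multiplicative (ι →₀ ℕ)`), is a divisor theory: (1) `τ b ∣ τ c` implies `b ∣ c`;
(2) every `d ∈ F` is a greatest common divisor of finitely many values of `τ`. -/
def IsDivisorTheory {M ι : Type*} [CancelCommMonoid M]
    (τ : M →* Multiplicative (ι →₀ ℕ)) : Prop :=
  (∀ b c : M, τ b ∣ τ c → b ∣ c) ∧
  (∀ d : Multiplicative (ι →₀ ℕ), ∃ s : Finset M, s.Nonempty ∧
    (∀ b ∈ s, d ∣ τ b) ∧ ∀ e : Multiplicative (ι →₀ ℕ), (∀ b ∈ s, e ∣ τ b) → e ∣ d)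

/-- The class group `F/τ(M)` of the divisor theory `τ` is a torsion group: every `d ∈ F`
has a power whose class is trivial, i.e. `d ^ n · τ b = τ c` for some `n ≥ 1` and `b, c ∈ M`. -/
def HasTorsionClassGroup {M ι : Type*} [CancelCommMonoid M]
    (τ : M →* Multiplicative (ι →₀ ℕ)) : Prop :=
  ∀ d : Multiplicative (ι →₀ ℕ), ∃ n : ℕ, 0 < n ∧ ∃ b c : M, d ^ n * τ b = τ c

section Aux

variable {M ι : Type*} [CancelCommMonoid M] {τ : M →* Multiplicative (ι →₀ ℕ)}

lemma SA.mdvd_iff (d e : Multiplicative (ι →₀ ℕ)) : d ∣ e ↔ d.toAdd ≤ e.toAdd := by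
  constructor
  · rintro ⟨c, rfl⟩
    simp [Finsupp.le_def]
  · intro hle
    exact ⟨Multiplicative.ofAdd (e.toAdd - d.toAdd), by
      apply Multiplicative.toAdd.injective
      simp [add_tsub_cancel_of_le hle]⟩

lemma SA.tau_inj (hdt : IsDivisorTheory τ) (hred : IsReducedM M) :
    Function.Injective τ := by
  intro b c hbc
  obtain ⟨s, hs⟩ := hdt.1 b c (hbc ▸ dvd_refl _)
  obtain ⟨t, ht⟩ := hdt.1 c b (hbc ▸ dvd_refl _)
  have hst : s * t = 1 := by
    have h2 : b * (s * t) = b * 1 := by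
      rw [mul_one, ← mul_assoc, ← hs, ← ht]
    exact mul_left_cancel h2
  rw [hs, hred s (IsUnit.of_mul_eq_one _ hst), mul_one]

lemma SA.unit_iff (hred : IsReducedM M) (u : M) : IsUnit u ↔ u = 1 :=
  ⟨hred u, fun h => h ▸ isUnit_one⟩

lemma SA.tau_eq_one (hdt : IsDivisorTheory τ) (hred : IsReducedM M) {u : M}
    (hu : τ u = 1) : u = 1 :=
  SA.tau_inj hdt hred (by rw [hu, map_one])

/-- degree -/
def SA.deg (d : Multiplicative (ι →₀ ℕ)) : ℕ := d.toAdd.sum fun _ n => n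

lemma SA.deg_mul (d e : Multiplicative (ι →₀ ℕ)) : SA.deg (d * e) = SA.deg d + SA.deg e := by
  unfold SA.deg
  rw [toAdd_mul]
  exact Finsupp.sum_add_index' (fun _ => rfl) (fun _ _ _ => rfl)

lemma SA.deg_pos {d : Multiplicative (ι →₀ ℕ)} (hd : d ≠ 1) : 0 < SA.deg d := by
  have hne : d.toAdd ≠ 0 := fun h => hd (Multiplicative.toAdd.injective (by simpa using h))
  rcases Finsupp.support_nonempty_iff.mpr hne with ⟨i, hi⟩
  calc 0 < d.toAdd i := Nat.pos_of_ne_zero (Finsupp.mem_support_iff.mp hi)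
    _ ≤ _ := Finset.single_le_sum (f := fun j => d.toAdd j) (fun j _ => Nat.zero_le _) hi

/-- atomicity -/
lemma SA.atomic (hdt : IsDivisorTheory τ) (hred : IsReducedM M) :
    ∀ N, ∀ x : M, SA.deg (τ x) ≤ N → x ≠ 1 →
      ∃ s : Multiset M, (∀ b ∈ s, IsAtomM b) ∧ s.prod = x := by
  intro N
  induction N with
  | zero =>
    intro x hx hx1
    have := SA.deg_pos (d := τ x) (fun h => hx1 (SA.tau_eq_one hdt hred h))
    omega
  | succ N ih =>
    intro x hx hx1
    by_cases hat : IsAtomM x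
    · exact ⟨{x}, by simpa using hat, by simp⟩
    · have hnu : ¬ IsUnit x := (SA.unit_iff hred x).not.mpr hx1
      rw [IsAtomM, not_and_or] at hat
      rcases hat with hat | hat
      · exact absurd hnu (not_not.mpr (not_not.mp hat))
      · push_neg at hat
        obtain ⟨b, c, hbc, hb, hc⟩ := hat
        have hb1 : b ≠ 1 := fun h => hb (h ▸ isUnit_one)
        have hc1 : c ≠ 1 := fun h => hc (h ▸ isUnit_one)
        have hdb : 0 < SA.deg (τ b) := SA.deg_pos (fun h => hb1 (SA.tau_eq_one hdt hred h))
        have hdc : 0 < SA.deg (τ c) := SA.deg_pos (fun h => hc1 (SA.tau_eq_one hdt hred h))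
        have hsum : SA.deg (τ b) + SA.deg (τ c) = SA.deg (τ x) := by
          rw [hbc, map_mul, SA.deg_mul]
        obtain ⟨sb, hsb, hsbp⟩ := ih b (by omega) hb1
        obtain ⟨sc, hsc, hscp⟩ := ih c (by omega) hc1
        exact ⟨sb + sc, fun a ha => ((Multiset.mem_add.mp ha).elim (hsb a) (hsc a)),
          by rw [Multiset.prod_add, hsbp, hscp, hbc]⟩

end Aux

section Aux2
variable {M ι : Type*} [CancelCommMonoid M] {τ : M →* Multiplicative (ι →₀ ℕ)}

lemma SA.pure_power (hdt : IsDivisorTheory τ) (htor : HasTorsionClassGroup τ)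
    (d : Multiplicative (ι →₀ ℕ)) :
    ∃ n : ℕ, 0 < n ∧ ∃ e : M, (τ e).toAdd = n • d.toAdd := by
  obtain ⟨n, hn, b, c, hbc⟩ := htor d
  obtain ⟨e, he⟩ := hdt.1 b c ⟨d ^ n, by rw [← hbc, mul_comm]⟩
  refine ⟨n, hn, e, ?_⟩
  have hcan : τ b * τ e = τ b * d ^ n := by rw [← map_mul, ← he, ← hbc, mul_comm]
  have he2 : τ e = d ^ n := mul_left_cancel hcan
  rw [he2, toAdd_pow]

lemma SA.single_prime (hdt : IsDivisorTheory τ) (htor : HasTorsionClassGroup τ)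
    (hred : IsReducedM M) {a : M} (ha : IsStrongAtomM a) :
    ∃ p : ι, ∃ k : ℕ, 0 < k ∧ (τ a).toAdd = Finsupp.single p k := by
  classical
  have ha1 : a ≠ 1 := fun h => ha.1.1 (h ▸ isUnit_one)
  have hta : (τ a).toAdd ≠ 0 := by
    intro h0
    exact ha1 (SA.tau_eq_one hdt hred (Multiplicative.toAdd.injective (by simpa using h0)))
  obtain ⟨p, hp⟩ := Finsupp.support_nonempty_iff.mpr hta
  have hcp : 0 < (τ a).toAdd p := Nat.pos_of_ne_zero (Finsupp.mem_support_iff.mp hp)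
  refine ⟨p, (τ a).toAdd p, hcp, ?_⟩
  -- key claim: no other prime in the support
  have key : ∀ q, q ≠ p → (τ a).toAdd q = 0 := by
    intro q hqp
    by_contra hq0
    have hcq : 0 < (τ a).toAdd q := Nat.pos_of_ne_zero hq0
    set cp := (τ a).toAdd p with hcpdef
    -- pure power at p
    obtain ⟨n, hn, e, he⟩ := SA.pure_power hdt htor (Multiplicative.ofAdd (Finsupp.single p 1))
    have he' : (τ e).toAdd = Finsupp.single p n := by
      rw [he]; simp [Finsupp.smul_single]
    set u := e ^ cp with hu
    have hut : (τ u).toAdd = Finsupp.single p (cp * n) := by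
      rw [hu, map_pow, toAdd_pow, he', Finsupp.smul_single, smul_eq_mul]
    have hdvd : u ∣ a ^ n := by
      apply hdt.1
      rw [SA.mdvd_iff, hut, map_pow, toAdd_pow, Finsupp.le_def]
      intro i
      by_cases hip : i = p
      · subst hip; simp [Finsupp.single_apply, mul_comm]; exact le_rfl
      · simp [Finsupp.single_apply, Ne.symm hip]
    obtain ⟨w, hw⟩ := hdvd
    have hu1 : u ≠ 1 := by
      intro h1
      rw [h1, map_one] at hut
      have h2 : Finsupp.single p (cp * n) = (0 : ι →₀ ℕ) := by simpa using hut.symm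
      rw [Finsupp.single_eq_zero] at h2
      have := Nat.mul_pos hcp hn
      omega
    have hsplit : (τ (a ^ n)).toAdd = (τ u).toAdd + (τ w).toAdd := by
      rw [hw, map_mul, toAdd_mul]
    have hwq : 0 < (τ w).toAdd q := by
      have h1 : n * (τ a).toAdd q = (τ u).toAdd q + (τ w).toAdd q := by
        have := congrFun (congrArg (fun f => f.toFun) hsplit) q
        simpa [map_pow, toAdd_pow] using congrArg (fun f => f q) hsplit
      rw [hut] at h1
      simp [Finsupp.single_apply, hqp.symm] at h1
      nlinarith
    have hw1 : w ≠ 1 := by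
      intro h1; rw [h1, map_one] at hwq; simp at hwq
    obtain ⟨su, hsu, hsup⟩ := SA.atomic hdt hred (SA.deg (τ u)) u le_rfl hu1
    obtain ⟨sw, hsw, hswp⟩ := SA.atomic hdt hred (SA.deg (τ w)) w le_rfl hw1
    have hrep := ha.2 n hn (su + sw)
      (fun b hb => (Multiset.mem_add.mp hb).elim (hsu b) (hsw b))
      (by rw [Multiset.prod_add, hsup, hswp, hw])
    have hsune : su ≠ 0 := by
      intro h0; rw [h0] at hsup; simp at hsup; exact hu1 hsup.symm
    obtain ⟨b, hb⟩ := Multiset.exists_mem_of_ne_zero hsune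
    have hba : b = a := by
      have : b ∈ Multiset.replicate n a := hrep ▸ Multiset.mem_add.mpr (Or.inl hb)
      exact Multiset.eq_of_mem_replicate this
    have hadvdu : a ∣ u := hba ▸ Multiset.dvd_prod hb |>.trans (hsup ▸ dvd_refl u)
    have hle : (τ a).toAdd ≤ (τ u).toAdd := by
      obtain ⟨t, ht⟩ := hadvdu
      rw [ht, map_mul, toAdd_mul]; exact le_add_of_le_of_nonneg le_rfl zero_le
    have := hle q
    rw [hut] at this
    simp [Finsupp.single_apply, hqp.symm] at this
    omega
  ext i
  by_cases hip : i = p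
  · subst hip; simp
  · rw [key i hip, Finsupp.single_apply]; simp [Ne.symm hip]

end Aux2

section Aux3
variable {M ι : Type*} [CancelCommMonoid M] {τ : M →* Multiplicative (ι →₀ ℕ)}

lemma SA.eq_of_same_prime (hdt : IsDivisorTheory τ) (hred : IsReducedM M)
    {a b : M} (ha : IsStrongAtomM a) (hb : IsStrongAtomM b) {p : ι} {k l : ℕ}
    (hk : 0 < k) (hl : 0 < l) (hak : (τ a).toAdd = Finsupp.single p k)
    (hbl : (τ b).toAdd = Finsupp.single p l) : b = a := by
  have h1 : a ^ l = b ^ k := by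
    apply SA.tau_inj hdt hred
    apply Multiplicative.toAdd.injective
    show Multiplicative.toAdd (τ (a ^ l)) = Multiplicative.toAdd (τ (b ^ k))
    simp only [map_pow, toAdd_pow, hak, hbl, Finsupp.smul_single, smul_eq_mul]
    rw [mul_comm]
  obtain ⟨t, ht⟩ := h1 ▸ dvd_pow_self b hk.ne'
  have hbmem : ∀ s : Multiset M, (∀ c ∈ s, IsAtomM c) → (b ::ₘ s).prod = a ^ l → b = a := by
    intro s hs hprod
    have hrep := ha.2 l hl (b ::ₘ s)
      (fun c hc => by
        rcases Multiset.mem_cons.mp hc with rfl | hc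
        · exact hb.1
        · exact hs c hc) hprod
    exact Multiset.eq_of_mem_replicate (hrep ▸ Multiset.mem_cons_self b s)
  by_cases ht1 : t = 1
  · exact hbmem 0 (by simp) (by simpa [ht1] using ht.symm)
  · obtain ⟨st, hst, hstp⟩ := SA.atomic hdt hred (SA.deg (τ t)) t le_rfl ht1
    exact hbmem st hst (by rw [Multiset.prod_cons, hstp, ← ht])

lemma SA.eval (hdt : IsDivisorTheory τ) (htor : HasTorsionClassGroup τ)
    (hred : IsReducedM M) {z : M} {m : ℕ} {F : M →₀ ℕ}
    (hF : ∀ a ∈ F.support, IsStrongAtomM a) (hz : z ^ m = F.prod fun a k => a ^ k)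
    {a : M} (ha : IsStrongAtomM a) {p : ι} {k : ℕ} (hk : 0 < k)
    (hap : (τ a).toAdd = Finsupp.single p k) :
    m * (τ z).toAdd p = F a * k := by
  classical
  have h1 : (τ z) ^ m = F.prod fun b j => (τ b) ^ j := by
    rw [← map_pow, hz, map_finsuppProd]
    simp [map_pow]
  have h2 : m • (τ z).toAdd = ∑ b ∈ F.support, F b • (τ b).toAdd := by
    have := congrArg Multiplicative.toAdd h1
    rw [toAdd_pow] at this
    rw [this, Finsupp.prod]
    rw [toAdd_prod]
    exact Finset.sum_congr rfl fun b _ => by rw [toAdd_pow]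
  have h3 : m * (τ z).toAdd p = ∑ b ∈ F.support, F b * (τ b).toAdd p := by
    have := congrArg (fun φ => φ p) h2
    simpa [Finsupp.finset_sum_apply] using this
  rw [h3]
  rw [Finset.sum_eq_single a]
  · rw [hap, Finsupp.single_apply]; simp
  · intro b hb hba
    obtain ⟨q, l, hl, hbq⟩ := SA.single_prime hdt htor hred (hF b hb)
    have hqp : q ≠ p := by
      intro rfl'
      subst rfl'
      exact hba (SA.eq_of_same_prime hdt hred ha (hF b hb) hk hl hap hbq)
    rw [hbq, Finsupp.single_apply]
    simp [hqp]
  · intro hna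
    rw [Finsupp.notMem_support_iff.mp hna, zero_mul]

end Aux3

/-- The functions `λ_a(x) = x(a)/m(x)` given by the Decay Theorem are additive: if
`x ^ mx`, `y ^ my` and `(x*y) ^ mz` factor into strong atoms with exponent functions
`f`, `g` and `h` respectively, then `h a / mz = f a / mx + g a / my` for every `a`. -/
theorem lambda_is_monoid_hom
    {M ι : Type*} [CancelCommMonoid M] (τ : M →* Multiplicative (ι →₀ ℕ))
    (hdt : IsDivisorTheory τ) (htor : HasTorsionClassGroup τ) (hred : IsReducedM M)
    (x y : M) (mx my mz : ℕ) (hmx : 0 < mx) (hmy : 0 < my) (hmz : 0 < mz)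
    (f g h : M →₀ ℕ)
    (hf : ∀ a ∈ f.support, IsStrongAtomM a) (hg : ∀ a ∈ g.support, IsStrongAtomM a)
    (hh : ∀ a ∈ h.support, IsStrongAtomM a)
    (hfx : x ^ mx = f.prod fun a k => a ^ k) (hgy : y ^ my = g.prod fun a k => a ^ k)
    (hhxy : (x * y) ^ mz = h.prod fun a k => a ^ k) :
    ∀ a : M, (h a : ℚ) / mz = (f a : ℚ) / mx + (g a : ℚ) / my := by
  classical
  intro a
  by_cases hmem : a ∈ f.support ∪ g.support ∪ h.support
  · have ha : IsStrongAtomM a := by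
      rcases Finset.mem_union.mp hmem with hm | hm
      · rcases Finset.mem_union.mp hm with hm | hm
        · exact hf a hm
        · exact hg a hm
      · exact hh a hm
    obtain ⟨p, k, hk, hap⟩ := SA.single_prime hdt htor hred ha
    have E1 := SA.eval hdt htor hred hf hfx ha hk hap
    have E2 := SA.eval hdt htor hred hg hgy ha hk hap
    have E3 := SA.eval hdt htor hred hh hhxy ha hk hap
    rw [map_mul, toAdd_mul, Finsupp.add_apply] at E3
    set tx := (τ x).toAdd p with htx
    set ty := (τ y).toAdd p with hty
    have e1 : (mx : ℚ) * tx = f a * k := by exact_mod_cast E1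
    have e2 : (my : ℚ) * ty = g a * k := by exact_mod_cast E2
    have e3 : (mz : ℚ) * (tx + ty) = h a * k := by exact_mod_cast E3
    have hkq : (k : ℚ) ≠ 0 := Nat.cast_ne_zero.mpr hk.ne'
    have hq : (h a : ℚ) * k * mx * my = (f a : ℚ) * k * mz * my + (g a : ℚ) * k * mz * mx := by
      linear_combination (mz * my : ℚ) * e1 + (mz * mx : ℚ) * e2 - (mx * my : ℚ) * e3
    have hq2 : (h a : ℚ) * mx * my = (f a : ℚ) * mz * my + (g a : ℚ) * mz * mx := by
      apply mul_right_cancel₀ hkq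
      linear_combination hq
    have hmxq : (mx : ℚ) ≠ 0 := Nat.cast_ne_zero.mpr hmx.ne'
    have hmyq : (my : ℚ) ≠ 0 := Nat.cast_ne_zero.mpr hmy.ne'
    have hmzq : (mz : ℚ) ≠ 0 := Nat.cast_ne_zero.mpr hmz.ne'
    field_simp
    linear_combination hq2
  · simp only [Finset.mem_union, not_or] at hmem
    rw [Finsupp.notMem_support_iff.mp hmem.1.1, Finsupp.notMem_support_iff.mp hmem.1.2,
      Finsupp.notMem_support_iff.mp hmem.2]
    simp
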